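/- arXiv:2207.11977 — 2 statements merged into one kernel-verified Lean document; each statement's English description precedes it below -/
import Mathlib

section
/- Let M ∈ ℝ^{n×n}, B ∈ ℝ^{n×m}, S ∈ ℝ^{n×n} symmetric positive semidefinite, and P ∈ ℝ^{n×n} symmetric positive definite satisfying the algebraic Riccati inequality Mᵀ P + P M + P B Bᵀ P + S ≺ 0. Then for every e ∈ ℝⁿ with e ≠ 0 and every w ∈ ℝ^m with ‖w‖² ≤ eᵀ S e, it holds that 2 eᵀ P (M e + B w) < 0. -/
open Matrix

private lemma dp_aux {n m : ℕ} (A : Matrix (Fin n) (Fin m) ℝ) (u : Fin n → ℝ) (x : Fin m → ℝ) :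
    u ⬝ᵥ A *ᵥ x = Aᵀ *ᵥ u ⬝ᵥ x := by
  rw [dotProduct_mulVec, mulVec_transpose]

theorem stmt5 (n m : ℕ)
    (M S P : Matrix (Fin n) (Fin n) ℝ) (B : Matrix (Fin n) (Fin m) ℝ)
    (hS : S.PosSemidef) (hP : P.PosDef)
    (hARI : (-(Mᵀ * P + P * M + P * B * Bᵀ * P + S)).PosDef) :
    ∀ e : EuclideanSpace ℝ (Fin n), e ≠ 0 →
      ∀ w : EuclideanSpace ℝ (Fin m), ‖w‖ ^ 2 ≤ e ⬝ᵥ S.mulVec e →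
        2 * (e ⬝ᵥ P.mulVec (M.mulVec e + B.mulVec w)) < 0 := by
  intro e he w hw
  have he' : (e : Fin n → ℝ) ≠ 0 := fun h => he (by ext i; exact congrFun h i)
  have hARI' := hARI.dotProduct_mulVec_pos he'
  simp only [star_trivial, neg_mulVec, dotProduct_neg, add_mulVec, dotProduct_add] at hARI'
  have hPsymm : Pᵀ = P := hP.1
  set v : Fin m → ℝ := Bᵀ *ᵥ (P *ᵥ e) with hv
  have hcross : e ⬝ᵥ (P *ᵥ (B *ᵥ w)) = v ⬝ᵥ w := by
    rw [dp_aux, hPsymm, dp_aux, hv]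
  have hquad : e ⬝ᵥ ((P * B * Bᵀ * P) *ᵥ e) = v ⬝ᵥ v := by
    rw [← mulVec_mulVec, ← mulVec_mulVec, ← mulVec_mulVec, dp_aux, hPsymm, dp_aux, hv]
  have hMt : e ⬝ᵥ ((Mᵀ * P) *ᵥ e) = e ⬝ᵥ ((P * M) *ᵥ e) := by
    rw [← mulVec_mulVec, ← mulVec_mulVec, dp_aux, transpose_transpose, dp_aux, hPsymm,
      dotProduct_comm]
  have hvw : 2 * (v ⬝ᵥ w) ≤ v ⬝ᵥ v + w ⬝ᵥ w := by
    have h := dotProduct_star_self_nonneg (v - (fun i => w i : Fin m → ℝ))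
    simp only [star_trivial, sub_dotProduct, dotProduct_sub] at h
    rw [dotProduct_comm w v] at h
    linarith
  have hwnorm : w ⬝ᵥ w = ‖w‖ ^ 2 := by
    rw [EuclideanSpace.norm_eq, Real.sq_sqrt (by positivity)]
    simp [dotProduct, sq]
  have hPMB : e ⬝ᵥ (P *ᵥ (M *ᵥ e + B *ᵥ w)) =
      e ⬝ᵥ ((P * M) *ᵥ e) + v ⬝ᵥ w := by
    rw [mulVec_add, dotProduct_add, ← hcross, mulVec_mulVec]
  rw [hPMB]
  nlinarith [hARI', hMt, hvw, hwnorm, hw, hquad]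
end

section
/- Let M, B, S, P be as in the algebraic Riccati inequality Mᵀ P + P M + P B Bᵀ P + S ≺ 0 with P symmetric positive definite and S symmetric positive semidefinite. Then there exists α > 0 such that for all e ∈ ℝⁿ and all w ∈ ℝ^m with ‖w‖² ≤ eᵀ S e, one has 2 eᵀ P (M e + B w) ≤ −α eᵀ P e. -/
open Matrix

lemma quad_smul (n : ℕ) (N : Matrix (Fin n) (Fin n) ℝ) (a : ℝ) (e : Fin n → ℝ) :
    (a • e) ⬝ᵥ N.mulVec (a • e) = a ^ 2 * (e ⬝ᵥ N.mulVec e) := by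
  simp [Matrix.mulVec_smul, dotProduct_smul, smul_dotProduct, smul_eq_mul]
  ring

lemma quad_ratio (n : ℕ) (N P : Matrix (Fin n) (Fin n) ℝ)
    (hN : N.PosDef) (hP : P.PosDef) :
    ∃ α : ℝ, 0 < α ∧ ∀ e : EuclideanSpace ℝ (Fin n),
      α * (e ⬝ᵥ P.mulVec e) ≤ e ⬝ᵥ N.mulVec e := by
  rcases Nat.eq_zero_or_pos n with hn | hn
  · subst hn
    exact ⟨1, one_pos, fun e => by simp [dotProduct]⟩
  · haveI : NeZero n := ⟨hn.ne'⟩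
    set f : EuclideanSpace ℝ (Fin n) → ℝ := fun e => e ⬝ᵥ N.mulVec e with hf
    set g : EuclideanSpace ℝ (Fin n) → ℝ := fun e => e ⬝ᵥ P.mulVec e with hg
    have hfc : Continuous f := by
      simp only [hf, dotProduct, Matrix.mulVec]; fun_prop
    have hgc : Continuous g := by
      simp only [hg, dotProduct, Matrix.mulVec]; fun_prop
    have hsc : IsCompact (Metric.sphere (0 : EuclideanSpace ℝ (Fin n)) 1) :=
      isCompact_sphere _ _
    have hsne : (Metric.sphere (0 : EuclideanSpace ℝ (Fin n)) 1).Nonempty :=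
      NormedSpace.sphere_nonempty.mpr zero_le_one
    obtain ⟨x₀, hx₀, hmin⟩ := hsc.exists_isMinOn hsne hfc.continuousOn
    obtain ⟨y₀, hy₀, hmax⟩ := hsc.exists_isMaxOn hsne hgc.continuousOn
    have hx₀ne : x₀ ≠ 0 := by
      intro h; rw [h] at hx₀; simp at hx₀
    have hc : 0 < f x₀ := by simpa using hN.dotProduct_mulVec_pos (x := x₀.ofLp) (by simpa using hx₀ne)
    have hC : 0 < g y₀ := by
      have hy₀ne : y₀ ≠ 0 := by intro h; rw [h] at hy₀; simp at hy₀
      calc (0:ℝ) < g y₀ := by simpa using hP.dotProduct_mulVec_pos (x := y₀.ofLp) (by simpa using hy₀ne)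
      _ = g y₀ := rfl
    refine ⟨f x₀ / g y₀, div_pos hc hC, fun e => ?_⟩
    by_cases he : e = 0
    · simp [he, hf, hg, dotProduct]
    · have hne : ‖e‖ ≠ 0 := norm_ne_zero_iff.mpr he
      set u : EuclideanSpace ℝ (Fin n) := ‖e‖⁻¹ • e with hu
      have hus : u ∈ Metric.sphere (0 : EuclideanSpace ℝ (Fin n)) 1 := by
        simp [hu, norm_smul, abs_of_nonneg (norm_nonneg e), inv_mul_cancel₀ hne]
      have heu : e = ‖e‖ • u := by
        rw [hu, smul_smul, mul_inv_cancel₀ hne, one_smul]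
      have hfe : f e = ‖e‖ ^ 2 * f u := by
        conv_lhs => rw [heu]
        exact quad_smul n N _ _
      have hge : g e = ‖e‖ ^ 2 * g u := by
        conv_lhs => rw [heu]
        exact quad_smul n P _ _
      show f x₀ / g y₀ * g e ≤ f e
      rw [hfe, hge]
      have h1 : g u ≤ g y₀ := hmax hus
      have h2 : f x₀ ≤ f u := hmin hus
      have hn2 : (0:ℝ) < ‖e‖ ^ 2 := by positivity
      have key : f x₀ / g y₀ * g u ≤ f u := by
        have : f x₀ / g y₀ * g u ≤ f x₀ := by
          rw [div_mul_eq_mul_div, div_le_iff₀ hC]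
          nlinarith
        linarith
      calc f x₀ / g y₀ * (‖e‖ ^ 2 * g u) = ‖e‖ ^ 2 * (f x₀ / g y₀ * g u) := by ring
        _ ≤ ‖e‖ ^ 2 * f u := by nlinarith

lemma symm_quad (n : ℕ) (P : Matrix (Fin n) (Fin n) ℝ) (hPt : Pᵀ = P) (e x : Fin n → ℝ) :
    e ⬝ᵥ P.mulVec x = (P.mulVec e) ⬝ᵥ x := by
  rw [Matrix.dotProduct_mulVec, ← Matrix.mulVec_transpose, hPt]

lemma norm_sq_eq_dot (k : ℕ) (w : EuclideanSpace ℝ (Fin k)) : ‖w‖ ^ 2 = w ⬝ᵥ w := by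
  rw [EuclideanSpace.norm_eq, Real.sq_sqrt (by positivity)]
  simp [dotProduct, sq]

theorem stmt17 (n m : ℕ)
    (M S P : Matrix (Fin n) (Fin n) ℝ) (B : Matrix (Fin n) (Fin m) ℝ)
    (hS : S.PosSemidef) (hP : P.PosDef)
    (hARI : (-(Mᵀ * P + P * M + P * B * Bᵀ * P + S)).PosDef) :
    ∃ α : ℝ, 0 < α ∧
      ∀ (e : EuclideanSpace ℝ (Fin n)) (w : EuclideanSpace ℝ (Fin m)),
        ‖w‖ ^ 2 ≤ e ⬝ᵥ S.mulVec e →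
          2 * (e ⬝ᵥ P.mulVec (M.mulVec e + B.mulVec w)) ≤ -α * (e ⬝ᵥ P.mulVec e) := by
  have hPt : Pᵀ = P := by simpa using hP.1.eq
  obtain ⟨α, hα, hratio⟩ := quad_ratio n _ P hARI hP
  refine ⟨α, hα, fun e w hw => ?_⟩
  set v : Fin m → ℝ := Bᵀ.mulVec (P.mulVec e) with hv
  -- cross term
  have hcross : e ⬝ᵥ P.mulVec (B.mulVec w) = v ⬝ᵥ w := by
    rw [symm_quad n P hPt, Matrix.dotProduct_mulVec, ← Matrix.mulVec_transpose, hv]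
  have hvv : e ⬝ᵥ (P*B*Bᵀ*P).mulVec e = v ⬝ᵥ v := by
    rw [← Matrix.mulVec_mulVec, ← Matrix.mulVec_mulVec, ← Matrix.mulVec_mulVec,
      symm_quad n P hPt, Matrix.dotProduct_mulVec, ← Matrix.mulVec_transpose, hv]
  have hMt : e ⬝ᵥ (Mᵀ*P).mulVec e = e ⬝ᵥ P.mulVec (M.mulVec e) := by
    rw [← Matrix.mulVec_mulVec, Matrix.dotProduct_mulVec, ← Matrix.mulVec_transpose,
      Matrix.transpose_transpose, symm_quad n P hPt, dotProduct_comm]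
  have hPM : e ⬝ᵥ (P*M).mulVec e = e ⬝ᵥ P.mulVec (M.mulVec e) := by
    rw [← Matrix.mulVec_mulVec]
  have hamgm : 2 * (v ⬝ᵥ w) ≤ v ⬝ᵥ v + w ⬝ᵥ w := by
    simp only [dotProduct]
    have h : (0:ℝ) ≤ ∑ i, (v i - w i) * (v i - w i) :=
      Finset.sum_nonneg fun i _ => mul_self_nonneg _
    have hexp : ∑ i, (v i - w i) * (v i - w i)
        = ∑ i, v i * v i - 2 * ∑ i, v i * w i + ∑ i, w i * w i := by
      rw [Finset.mul_sum, ← Finset.sum_sub_distrib, ← Finset.sum_add_distrib]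
      exact Finset.sum_congr rfl fun i _ => by ring
    rw [hexp] at h
    linarith
  have hww : w ⬝ᵥ w ≤ e ⬝ᵥ S.mulVec e := by rw [← norm_sq_eq_dot]; exact hw
  have hRatio := hratio e
  have hNexp : e ⬝ᵥ (-(Mᵀ * P + P * M + P * B * Bᵀ * P + S)).mulVec e
      = -(2 * (e ⬝ᵥ P.mulVec (M.mulVec e)) + v ⬝ᵥ v + e ⬝ᵥ S.mulVec e) := by
    rw [Matrix.neg_mulVec, dotProduct_neg, Matrix.add_mulVec, Matrix.add_mulVec,
      Matrix.add_mulVec, dotProduct_add, dotProduct_add, dotProduct_add,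
      hMt, hPM, hvv]
    ring
  rw [hNexp] at hRatio
  have hsplit : e ⬝ᵥ P.mulVec (M.mulVec e + B.mulVec w)
      = e ⬝ᵥ P.mulVec (M.mulVec e) + v ⬝ᵥ w := by
    rw [Matrix.mulVec_add, dotProduct_add, hcross]
  rw [hsplit]
  linarith
end
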